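/- Let A be a nonnegative n×n matrix with max-times spectral radius λ > 0 (the maximum cycle geometric mean). Then the minimum over all positive vectors x of x^- A x = max_{i,j} a_{ij} x_j / x_i equals λ, and the set of minimizers is exactly { (λ^{-1}A)* u : u positive }. -/

import Mathlib

open scoped BigOperators

noncomputable def mtMulMat {n : ℕ} (A B : Matrix (Fin n) (Fin n) ℝ) :
    Matrix (Fin n) (Fin n) ℝ :=
  fun i j => ⨆ k, A i k * B k j

noncomputable def mtMulVec {n : ℕ} (A : Matrix (Fin n) (Fin n) ℝ) (x : Fin n → ℝ) :
    Fin n → ℝ :=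
  fun i => ⨆ j, A i j * x j

noncomputable def mtPow {n : ℕ} (A : Matrix (Fin n) (Fin n) ℝ) : ℕ → Matrix (Fin n) (Fin n) ℝ
  | 0 => fun i j => if i = j then 1 else 0
  | m + 1 => mtMulMat (mtPow A m) A

noncomputable def mtTrace {n : ℕ} (A : Matrix (Fin n) (Fin n) ℝ) : ℝ := ⨆ i, A i i

noncomputable def mtTr {n : ℕ} (A : Matrix (Fin n) (Fin n) ℝ) : ℝ :=
  ⨆ m : Fin n, mtTrace (mtPow A (m.1 + 1))

noncomputable def kleeneStar {n : ℕ} (A : Matrix (Fin n) (Fin n) ℝ) :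
    Matrix (Fin n) (Fin n) ℝ :=
  fun i j => ⨆ m : Fin n, mtPow A m.1 i j

noncomputable def cycleMean {n : ℕ} (A : Matrix (Fin n) (Fin n) ℝ) (c : List (Fin n)) : ℝ :=
  (((c.zip (c.rotate 1)).map (fun p => A p.1 p.2)).prod) ^ ((1 : ℝ) / c.length)

noncomputable def specRad {n : ℕ} (A : Matrix (Fin n) (Fin n) ℝ) : ℝ :=
  sSup {r : ℝ | ∃ c : List (Fin n), c ≠ [] ∧ c.length ≤ n ∧ r = cycleMean A c}

/-! ### sup toolkit -/

section Sup

variable {n : ℕ} [NeZero n]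

lemma fsup_eq (f : Fin n → ℝ) :
    (⨆ i, f i) = Finset.univ.sup' Finset.univ_nonempty f :=
  (Finset.sup'_univ_eq_ciSup f).symm

lemma le_fsup (f : Fin n → ℝ) (i : Fin n) : f i ≤ ⨆ i, f i := by
  rw [fsup_eq]; exact Finset.le_sup' f (Finset.mem_univ i)

lemma fsup_le {f : Fin n → ℝ} {a : ℝ} (h : ∀ i, f i ≤ a) : (⨆ i, f i) ≤ a := by
  rw [fsup_eq]; exact Finset.sup'_le _ _ fun i _ => h i

lemma exists_fsup (f : Fin n → ℝ) : ∃ i, (⨆ i, f i) = f i := by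
  rw [fsup_eq]
  obtain ⟨i, _, hi⟩ := Finset.exists_mem_eq_sup' (Finset.univ_nonempty) f
  exact ⟨i, hi⟩

lemma fsup_nonneg {f : Fin n → ℝ} (h : ∀ i, 0 ≤ f i) : 0 ≤ ⨆ i, f i :=
  le_trans (h (Classical.arbitrary _)) (le_fsup f _)

lemma fsup_mono {f g : Fin n → ℝ} (h : ∀ i, f i ≤ g i) : (⨆ i, f i) ≤ ⨆ i, g i :=
  fsup_le fun i => le_trans (h i) (le_fsup g i)

lemma mul_fsup {a : ℝ} (ha : 0 ≤ a) (f : Fin n → ℝ) :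
    a * (⨆ i, f i) = ⨆ i, a * f i := by
  simp only [fsup_eq]
  exact Finset.comp_sup'_eq_sup'_comp _ (fun x => a * x) (fun x y => mul_max_of_nonneg x y ha)

lemma fsup_mul {a : ℝ} (ha : 0 ≤ a) (f : Fin n → ℝ) :
    (⨆ i, f i) * a = ⨆ i, f i * a := by
  simp only [fsup_eq]
  exact Finset.comp_sup'_eq_sup'_comp _ (fun x => x * a) (fun x y => max_mul_of_nonneg x y ha)

lemma fsup_comm (f : Fin n → Fin n → ℝ) :
    (⨆ i, ⨆ j, f i j) = ⨆ j, ⨆ i, f i j := by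
  simp only [fsup_eq]
  exact Finset.sup'_comm _ _ f

end Sup

/-! ### matrix toolkit -/

section Mat

variable {n : ℕ} [NeZero n] {A B C : Matrix (Fin n) (Fin n) ℝ}

lemma mtMulMat_nonneg (hA : ∀ i j, 0 ≤ A i j) (hB : ∀ i j, 0 ≤ B i j) :
    ∀ i j, 0 ≤ mtMulMat A B i j := fun i j =>
  fsup_nonneg fun k => mul_nonneg (hA i k) (hB k j)

lemma mtPow_nonneg (hA : ∀ i j, 0 ≤ A i j) (m : ℕ) : ∀ i j, 0 ≤ mtPow A m i j := by
  induction m with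
  | zero => intro i j; simp only [mtPow]; split <;> norm_num
  | succ m ih => exact mtMulMat_nonneg ih hA

lemma kleeneStar_nonneg (hA : ∀ i j, 0 ≤ A i j) : ∀ i j, 0 ≤ kleeneStar A i j :=
  fun i j => fsup_nonneg fun m => mtPow_nonneg hA m.1 i j

lemma mtMulMat_assoc (hA : ∀ i j, 0 ≤ A i j) (hC : ∀ i j, 0 ≤ C i j) :
    mtMulMat (mtMulMat A B) C = mtMulMat A (mtMulMat B C) := by
  funext i j
  show (⨆ k, (⨆ l, A i l * B l k) * C k j) = ⨆ l, A i l * ⨆ k, B l k * C k j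
  calc (⨆ k, (⨆ l, A i l * B l k) * C k j)
      = ⨆ k, ⨆ l, A i l * B l k * C k j := by
        refine iSup_congr fun k => ?_
        exact fsup_mul (hC k j) _
    _ = ⨆ l, ⨆ k, A i l * B l k * C k j := fsup_comm _
    _ = ⨆ l, A i l * ⨆ k, B l k * C k j := by
        refine iSup_congr fun l => ?_
        rw [mul_fsup (hA i l)]
        simp only [mul_assoc]

lemma mtMulMat_id_left (hB : ∀ i j, 0 ≤ B i j) : mtMulMat (mtPow A 0) B = B := by
  funext i j
  show (⨆ k, (if i = k then 1 else 0) * B k j) = B i j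
  refine le_antisymm (fsup_le fun k => ?_) ?_
  · by_cases h : i = k
    · simp [h]
    · simpa [h] using hB i j
  · have := le_fsup (fun k => (if i = k then 1 else 0) * B k j) i
    simpa using this

lemma mtMulMat_id_right (hB : ∀ i j, 0 ≤ B i j) : mtMulMat B (mtPow A 0) = B := by
  funext i j
  show (⨆ k, B i k * (if k = j then 1 else 0)) = B i j
  refine le_antisymm (fsup_le fun k => ?_) ?_
  · by_cases h : k = j
    · simp [h]
    · simpa [h] using hB i j
  · have := le_fsup (fun k => B i k * (if k = j then 1 else 0)) j
    simpa using this

lemma mtPow_succ_left (hA : ∀ i j, 0 ≤ A i j) (m : ℕ) :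
    mtPow A (m + 1) = mtMulMat A (mtPow A m) := by
  induction m with
  | zero =>
    show mtMulMat (mtPow A 0) A = mtMulMat A (mtPow A 0)
    rw [mtMulMat_id_left hA, mtMulMat_id_right hA]
  | succ m ih =>
    calc mtPow A (m + 2) = mtMulMat (mtPow A (m + 1)) A := rfl
      _ = mtMulMat (mtMulMat A (mtPow A m)) A := by rw [ih]
      _ = mtMulMat A (mtMulMat (mtPow A m) A) := mtMulMat_assoc hA hA
      _ = mtMulMat A (mtPow A (m + 1)) := rfl

lemma mtMulVec_nonneg (hA : ∀ i j, 0 ≤ A i j) {u : Fin n → ℝ} (hu : ∀ i, 0 ≤ u i) :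
    ∀ i, 0 ≤ mtMulVec A u i := fun i =>
  fsup_nonneg fun j => mul_nonneg (hA i j) (hu j)

lemma mtMulVec_assoc (hA : ∀ i j, 0 ≤ A i j) {u : Fin n → ℝ} (hu : ∀ i, 0 ≤ u i) :
    mtMulVec A (mtMulVec B u) = mtMulVec (mtMulMat A B) u := by
  funext i
  show (⨆ j, A i j * ⨆ k, B j k * u k) = ⨆ k, (⨆ j, A i j * B j k) * u k
  calc (⨆ j, A i j * ⨆ k, B j k * u k)
      = ⨆ j, ⨆ k, A i j * B j k * u k := by
        refine iSup_congr fun j => ?_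
        rw [mul_fsup (hA i j)]
        simp only [mul_assoc]
    _ = ⨆ k, ⨆ j, A i j * B j k * u k := fsup_comm _
    _ = ⨆ k, (⨆ j, A i j * B j k) * u k := by
        refine iSup_congr fun k => ?_
        rw [fsup_mul (hu k)]

lemma mtMulVec_mono_mat (hB : ∀ i j, A i j ≤ B i j) {u : Fin n → ℝ} (hu : ∀ i, 0 ≤ u i) :
    ∀ i, mtMulVec A u i ≤ mtMulVec B u i := fun i =>
  fsup_mono fun j => mul_le_mul_of_nonneg_right (hB i j) (hu j)

lemma mtMulVec_mono_vec (hA : ∀ i j, 0 ≤ A i j) {u v : Fin n → ℝ} (huv : ∀ i, u i ≤ v i) :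
    ∀ i, mtMulVec A u i ≤ mtMulVec A v i := fun i =>
  fsup_mono fun j => mul_le_mul_of_nonneg_left (huv j) (hA i j)

end Mat

/-! ### walks -/

section Walk

variable {n : ℕ} [NeZero n] {B : Matrix (Fin n) (Fin n) ℝ}

/-- weight of the walk `p 0, p 1, ..., p m`. -/
noncomputable def wtN (B : Matrix (Fin n) (Fin n) ℝ) (p : ℕ → Fin n) (m : ℕ) : ℝ :=
  ∏ t ∈ Finset.range m, B (p t) (p (t + 1))

lemma wtN_nonneg (hB : ∀ i j, 0 ≤ B i j) (p : ℕ → Fin n) (m : ℕ) : 0 ≤ wtN B p m :=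
  Finset.prod_nonneg fun t _ => hB _ _

lemma walk_le_pow (hB : ∀ i j, 0 ≤ B i j) (p : ℕ → Fin n) :
    ∀ m, wtN B p m ≤ mtPow B m (p 0) (p m) := by
  intro m
  induction m with
  | zero => simp [wtN, mtPow]
  | succ m ih =>
    have h1 : wtN B p (m + 1) = wtN B p m * B (p m) (p (m + 1)) :=
      Finset.prod_range_succ _ m
    rw [h1]
    have h2 : wtN B p m * B (p m) (p (m + 1)) ≤
        mtPow B m (p 0) (p m) * B (p m) (p (m + 1)) :=
      mul_le_mul_of_nonneg_right ih (hB _ _)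
    refine h2.trans ?_
    exact le_fsup (fun k => mtPow B m (p 0) k * B k (p (m + 1))) (p m)

lemma pow_eq_walk (hB : ∀ i j, 0 ≤ B i j) (m : ℕ) (i j : Fin n) :
    mtPow B m i j = 0 ∨
      ∃ p : ℕ → Fin n, p 0 = i ∧ p m = j ∧ wtN B p m = mtPow B m i j := by
  induction m generalizing j with
  | zero =>
    by_cases h : i = j
    · subst h
      exact Or.inr ⟨fun _ => i, rfl, rfl, by simp [wtN, mtPow]⟩
    · left; simp [mtPow, h]
  | succ m ih =>
    obtain ⟨k0, hk0⟩ := exists_fsup (fun k => mtPow B m i k * B k j)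
    have hval : mtPow B (m + 1) i j = mtPow B m i k0 * B k0 j := hk0
    rcases ih k0 with h0 | ⟨p, hp0, hpm, hpw⟩
    · left; rw [hval, h0, zero_mul]
    · right
      set q : ℕ → Fin n := fun t => if t ≤ m then p t else j with hq
      refine ⟨q, by simp [hq, hp0], by simp [hq], ?_⟩
      have hw : wtN B q m = wtN B p m := by
        refine Finset.prod_congr rfl fun t ht => ?_
        have ht' : t < m := Finset.mem_range.mp ht
        have e1 : q t = p t := if_pos (by omega)
        have e2 : q (t + 1) = p (t + 1) := if_pos (by omega)
        rw [e1, e2]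
      have hsucc : wtN B q (m + 1) = wtN B q m * B (q m) (q (m + 1)) :=
        Finset.prod_range_succ _ m
      have e3 : q m = k0 := by simp [hq, hpm]
      have e4 : q (m + 1) = j := if_neg (by omega)
      rw [hsucc, hw, e3, e4, hpw, hval]

end Walk

/-! ### list lemmas -/

section ListLemmas

variable {α : Type*}

lemma list_prod_nonneg {l : List α} {f : α → ℝ} (h : ∀ a ∈ l, 0 ≤ f a) :
    0 ≤ (l.map f).prod := by
  induction l with
  | nil => simp
  | cons a l ih =>
    simp only [List.map_cons, List.prod_cons]
    exact mul_nonneg (h a (by simp)) (ih fun b hb => h b (by simp [hb]))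

lemma list_prod_le_prod {l : List α} {f g : α → ℝ} (h0 : ∀ a ∈ l, 0 ≤ f a)
    (h : ∀ a ∈ l, f a ≤ g a) : (l.map f).prod ≤ (l.map g).prod := by
  induction l with
  | nil => simp
  | cons a l ih =>
    simp only [List.map_cons, List.prod_cons]
    refine mul_le_mul (h a (by simp)) (ih (fun b hb => h0 b (by simp [hb]))
      (fun b hb => h b (by simp [hb]))) (list_prod_nonneg fun b hb => h0 b (by simp [hb])) ?_
    exact le_trans (h0 a (by simp)) (h a (by simp))

lemma rpow_le_of_le_pow {r M : ℝ} {k : ℕ} (hk : 0 < k) (hr : 0 ≤ r) (hM : 0 ≤ M)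
    (h : r ≤ M ^ k) : r ^ ((1 : ℝ) / k) ≤ M := by
  have hk' : (k : ℝ) ≠ 0 := Nat.cast_ne_zero.mpr hk.ne'
  calc r ^ ((1 : ℝ) / k) ≤ (M ^ k) ^ ((1 : ℝ) / k) :=
        Real.rpow_le_rpow hr h (by positivity)
    _ = M := by
        rw [← Real.rpow_natCast M k, ← Real.rpow_mul hM]
        rw [mul_one_div, div_self hk', Real.rpow_one]

lemma le_pow_of_rpow_le {r lam : ℝ} {k : ℕ} (hk : 0 < k) (hr : 0 ≤ r)
    (h : r ^ ((1 : ℝ) / k) ≤ lam) : r ≤ lam ^ k := by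
  have hk' : (k : ℝ) ≠ 0 := Nat.cast_ne_zero.mpr hk.ne'
  have h1 : (r ^ ((1 : ℝ) / k)) ^ k = r := by
    rw [← Real.rpow_natCast (r ^ ((1 : ℝ) / k)) k, ← Real.rpow_mul hr]
    rw [one_div_mul_cancel hk', Real.rpow_one]
  calc r = (r ^ ((1 : ℝ) / k)) ^ k := h1.symm
    _ ≤ lam ^ k := pow_le_pow_left₀ (Real.rpow_nonneg hr _) h k

end ListLemmas

section Chain

variable {n : ℕ}

lemma chainH (f : Fin n × Fin n → ℝ) (q : ℕ → Fin n) :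
    ∀ k a z, ((((List.range' a (k + 1)).map q).zip
        (((List.range' (a + 1) k).map q) ++ [z])).map f).prod =
      (∏ t ∈ Finset.range k, f (q (a + t), q (a + t + 1))) * f (q (a + k), z) := by
  intro k
  induction k with
  | zero => intro a z; simp
  | succ k ih =>
    intro a z
    have e2 : List.range' (a + 1) (k + 1) = (a + 1) :: List.range' (a + 1 + 1) k :=
      List.range'_succ
    rw [List.range'_succ (s := a) (n := k + 1) (step := 1)]
    rw [show (List.map q (List.range' (a + 1) (k + 1)) ++ [z]) =
      List.map q ((a + 1) :: List.range' (a + 1 + 1) k) ++ [z] from by rw [← e2]]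
    simp only [List.map_cons, List.cons_append, List.zip_cons_cons, List.prod_cons]
    have hih := ih (a + 1) z
    rw [hih]
    have harith : ∀ t : ℕ, a + 1 + t = a + t + 1 := fun t => by omega
    have hprod : (∏ t ∈ Finset.range k, f (q (a + 1 + t), q (a + 1 + t + 1))) =
        ∏ t ∈ Finset.range k, f (q (a + t + 1), q (a + t + 1 + 1)) := by
      refine Finset.prod_congr rfl fun t _ => by rw [harith t]
    rw [hprod, harith k]
    rw [Finset.prod_range_succ' (fun t => f (q (a + t), q (a + t + 1))) k]
    simp only [Nat.add_zero, ← Nat.add_assoc]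
    ring

lemma cycle_edges (f : Fin n × Fin n → ℝ) (q : ℕ → Fin n) (k : ℕ) (hk : 0 < k)
    (hcl : q k = q 0) :
    ((((List.range k).map q).zip (((List.range k).map q).rotate 1)).map f).prod =
      ∏ t ∈ Finset.range k, f (q t, q (t + 1)) := by
  obtain ⟨k', rfl⟩ : ∃ k', k = k' + 1 := ⟨k - 1, by omega⟩
  rw [List.range_eq_range', List.range'_succ (s := 0) (n := k') (step := 1)]
  simp only [List.map_cons, List.rotate_cons_succ, List.rotate_zero]
  have H := chainH f q k' 0 (q 0)
  rw [List.range'_succ (s := 0) (n := k') (step := 1)] at H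
  simp only [List.map_cons, Nat.zero_add] at H ⊢
  rw [H, ← hcl]
  rw [Finset.prod_range_succ (fun t => f (q t, q (t + 1))) k']

end Chain

/-! ### spectral radius facts -/

section Spec

variable {n : ℕ} [NeZero n] {A : Matrix (Fin n) (Fin n) ℝ}

lemma list_prod_inv_map {α : Type*} (l : List α) (f : α → ℝ) :
    (l.map (fun a => (f a)⁻¹)).prod = ((l.map f).prod)⁻¹ := by
  induction l with
  | nil => simp
  | cons a l ih => simp [ih, mul_inv, mul_comm]

lemma specSet_nonempty :
    {r : ℝ | ∃ c : List (Fin n), c ≠ [] ∧ c.length ≤ n ∧ r = cycleMean A c}.Nonempty := by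
  refine ⟨cycleMean A [Classical.arbitrary (Fin n)], [Classical.arbitrary (Fin n)], by simp, ?_, rfl⟩
  simpa using Nat.one_le_iff_ne_zero.mpr (NeZero.ne n)

lemma cycleMean_nonneg (hA : ∀ i j, 0 ≤ A i j) (c : List (Fin n)) : 0 ≤ cycleMean A c :=
  Real.rpow_nonneg (list_prod_nonneg fun p _ => hA p.1 p.2) _

lemma specSet_bddAbove (hA : ∀ i j, 0 ≤ A i j) :
    BddAbove {r : ℝ | ∃ c : List (Fin n), c ≠ [] ∧ c.length ≤ n ∧ r = cycleMean A c} := by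
  set M : ℝ := ⨆ i, ⨆ j, A i j with hM
  have hM0 : 0 ≤ M := fsup_nonneg fun i => fsup_nonneg fun j => hA i j
  have hMij : ∀ i j, A i j ≤ M := fun i j =>
    le_trans (le_fsup (fun j' => A i j') j) (le_fsup (fun i' => ⨆ j', A i' j') i)
  refine ⟨M, fun r hr => ?_⟩
  obtain ⟨c, hne, _, rfl⟩ := hr
  set zl := c.zip (c.rotate 1) with hzl
  have hlen : zl.length = c.length := by
    simp [hzl, List.length_zip, List.length_rotate]
  have h1 : (zl.map (fun p => A p.1 p.2)).prod ≤ (zl.map (fun _ => M)).prod :=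
    list_prod_le_prod (fun p _ => hA p.1 p.2) (fun p _ => hMij p.1 p.2)
  have h2 : (zl.map (fun _ => M)).prod = M ^ c.length := by
    rw [List.map_const', List.prod_replicate, hlen]
  refine rpow_le_of_le_pow (List.length_pos_iff.mpr hne) ?_ hM0 (h1.trans_eq h2)
  exact list_prod_nonneg fun p _ => hA p.1 p.2

lemma cycleMean_le_specRad (hA : ∀ i j, 0 ≤ A i j) {c : List (Fin n)} (hne : c ≠ [])
    (hlen : c.length ≤ n) : cycleMean A c ≤ specRad A :=
  le_csSup (specSet_bddAbove hA) ⟨c, hne, hlen, rfl⟩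

lemma specRad_le_sup (hA : ∀ i j, 0 ≤ A i j) {x : Fin n → ℝ} (hx : ∀ i, 0 < x i) :
    specRad A ≤ ⨆ i, ⨆ j, A i j * x j / x i := by
  set M : ℝ := ⨆ i, ⨆ j, A i j * x j / x i with hM
  have hterm : ∀ i j, A i j * x j / x i ≤ M := fun i j =>
    le_trans (le_fsup (fun j' => A i j' * x j' / x i) j)
      (le_fsup (fun i' => ⨆ j', A i' j' * x j' / x i') i)
  have hM0 : 0 ≤ M := by
    have i0 := Classical.arbitrary (Fin n)
    refine le_trans ?_ (hterm i0 i0)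
    exact div_nonneg (mul_nonneg (hA i0 i0) (hx i0).le) (hx i0).le
  refine csSup_le specSet_nonempty fun r hr => ?_
  obtain ⟨c, hne, _, rfl⟩ := hr
  set zl := c.zip (c.rotate 1) with hzl
  have hlenr : (c.rotate 1).length = c.length := List.length_rotate c 1
  have hlen : zl.length = c.length := by simp [hzl, List.length_zip, hlenr]
  have key : ∀ p ∈ zl, A p.1 p.2 ≤ M * x p.1 / x p.2 := by
    intro p _
    rw [le_div_iff₀ (hx p.2)]
    have := hterm p.1 p.2
    rw [div_le_iff₀ (hx p.1)] at this
    linarith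
  have h1 : (zl.map (fun p => A p.1 p.2)).prod ≤ (zl.map (fun p => M * x p.1 / x p.2)).prod :=
    list_prod_le_prod (fun p _ => hA p.1 p.2) key
  have h2 : (zl.map (fun p => M * x p.1 / x p.2)).prod = M ^ c.length := by
    have e1 : (fun p : Fin n × Fin n => M * x p.1 / x p.2) =
        fun p => (fun p : Fin n × Fin n => M * x p.1) p * (fun p : Fin n × Fin n => (x p.2)⁻¹) p := by
      funext p; rw [div_eq_mul_inv]
    rw [e1, List.prod_map_mul]
    have e2 : (zl.map fun p => M * x p.1).prod =
        (zl.map (fun _ => M)).prod * (zl.map fun p => x p.1).prod := by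
      rw [← List.prod_map_mul]
    rw [e2, List.map_const', List.prod_replicate, hlen]
    have e3 : (zl.map fun p => x p.1).prod = (c.map x).prod := by
      have : zl.map (fun p => x p.1) = (zl.map Prod.fst).map x := by
        rw [List.map_map]; rfl
      rw [this, List.map_fst_zip (le_of_eq hlenr.symm)]
    have e4 : (zl.map fun p => (x p.2)⁻¹).prod = ((c.map x).prod)⁻¹ := by
      rw [list_prod_inv_map]
      have : zl.map (fun p => x p.2) = (zl.map Prod.snd).map x := by
        rw [List.map_map]; rfl
      rw [this, List.map_snd_zip (le_of_eq hlenr), List.map_rotate,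
        (List.rotate_perm (c.map x) 1).prod_eq]
    rw [e3, e4]
    have hQ : 0 < (c.map x).prod := by
      refine List.prod_pos fun b hb => ?_
      obtain ⟨a, _, rfl⟩ := List.mem_map.mp hb
      exact hx a
    field_simp
  refine rpow_le_of_le_pow (List.length_pos_iff.mpr hne) ?_ hM0 (h1.trans_eq h2)
  exact list_prod_nonneg fun p _ => hA p.1 p.2

lemma Bcycle_le_one (hA : ∀ i j, 0 ≤ A i j) (hlam : 0 < specRad A)
    (q : ℕ → Fin n) (k : ℕ) (hk : 0 < k) (hkn : k ≤ n) (hcl : q k = q 0) :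
    ∏ t ∈ Finset.range k, ((specRad A)⁻¹ • A) (q t) (q (t + 1)) ≤ 1 := by
  set lam := specRad A with hlamdef
  set c := (List.range k).map q with hc
  have hclen : c.length = k := by simp [hc]
  have hne : c ≠ [] := by
    simp only [hc, ne_eq, List.map_eq_nil_iff, List.range_eq_nil]
    omega
  have hmean : cycleMean A c ≤ lam := cycleMean_le_specRad hA hne (hclen ▸ hkn)
  have hedges := cycle_edges (fun p => A p.1 p.2) q k hk hcl
  have hPA : (0 : ℝ) ≤ ∏ t ∈ Finset.range k, A (q t) (q (t + 1)) :=
    Finset.prod_nonneg fun t _ => hA _ _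
  have hprodle : (∏ t ∈ Finset.range k, A (q t) (q (t + 1))) ≤ lam ^ k := by
    refine le_pow_of_rpow_le hk hPA ?_
    have : cycleMean A c = (∏ t ∈ Finset.range k, A (q t) (q (t + 1))) ^ ((1 : ℝ) / k) := by
      rw [cycleMean, hclen, ← hedges]
    rw [← this]; exact hmean
  have hentry : ∀ t, (lam⁻¹ • A) (q t) (q (t + 1)) = lam⁻¹ * A (q t) (q (t + 1)) := fun t => rfl
  calc (∏ t ∈ Finset.range k, (lam⁻¹ • A) (q t) (q (t + 1)))
      = ∏ t ∈ Finset.range k, lam⁻¹ * A (q t) (q (t + 1)) := by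
        exact Finset.prod_congr rfl fun t _ => hentry t
    _ = lam⁻¹ ^ k * ∏ t ∈ Finset.range k, A (q t) (q (t + 1)) := by
        rw [Finset.prod_mul_distrib, Finset.prod_const, Finset.card_range]
    _ ≤ lam⁻¹ ^ k * lam ^ k := by
        refine mul_le_mul_of_nonneg_left hprodle (by positivity)
    _ = 1 := by
        rw [← mul_pow, inv_mul_cancel₀ hlam.ne', one_pow]

end Spec

/-! ### power n bounded by Kleene star -/

section Surgery

variable {n : ℕ} [NeZero n] {B : Matrix (Fin n) (Fin n) ℝ}

lemma pow_le_star (hB : ∀ i j, 0 ≤ B i j)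
    (hc : ∀ (q : ℕ → Fin n) (k : ℕ), 0 < k → k ≤ n → q k = q 0 →
      ∏ t ∈ Finset.range k, B (q t) (q (t + 1)) ≤ 1)
    (i j : Fin n) : mtPow B n i j ≤ kleeneStar B i j := by
  have hn : 0 < n := Nat.pos_of_ne_zero (NeZero.ne n)
  rcases pow_eq_walk hB n i j with h0 | ⟨p, hp0, hpn, hw⟩
  · rw [h0]; exact kleeneStar_nonneg hB i j
  · -- pigeonhole
    obtain ⟨a, b, hab, heq⟩ := Fintype.exists_ne_map_eq_of_card_lt
      (fun t : Fin (n + 1) => p t.1) (by simp)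
    set aN := min a.1 b.1 with haN
    set bN := max a.1 b.1 with hbN
    have habN : aN < bN := by
      rcases lt_or_gt_of_ne (fun h : a.1 = b.1 => hab (Fin.ext h)) with h | h <;> omega
    have hpe : p aN = p bN := by
      rcases le_total a.1 b.1 with h | h
      · rw [show aN = a.1 by omega, show bN = b.1 by omega]; exact heq
      · rw [show aN = b.1 by omega, show bN = a.1 by omega]; exact heq.symm
    have hbn : bN ≤ n := by
      have := a.2; have := b.2; omega
    set k := bN - aN with hk
    have hk0 : 0 < k := by omega
    have hkn : k ≤ n := by omega
    have haddk : aN + k = bN := by omega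
    set q : ℕ → Fin n := fun t => if t < aN then p t else p (t + k) with hq
    have hq0 : q 0 = i := by
      by_cases h : 0 < aN
      · rw [hq]; simp only [if_pos h]; exact hp0
      · have ha0 : aN = 0 := by omega
        rw [hq]; simp only [ha0, lt_irrefl, if_neg (lt_irrefl 0), Nat.zero_add]
        rw [show k = bN by omega, ← hpe, ha0, hp0]
        simp
    have hqend : q (n - k) = j := by
      have h1 : ¬ (n - k < aN) := by omega
      rw [hq]; simp only [if_neg h1]
      rw [show n - k + k = n by omega, hpn]
    -- cycle bound
    have hcyc : ∏ t ∈ Finset.range k, B (p (aN + t)) (p (aN + t + 1)) ≤ 1 := by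
      have := hc (fun t => p (aN + t)) k hk0 hkn (by simp only [haddk, Nat.add_zero, hpe.symm])
      simpa [Nat.add_assoc] using this
    -- product decomposition
    have hsum1 : n = aN + (k + (n - bN)) := by omega
    have hsum2 : n - k = aN + (n - bN) := by omega
    have hgf : ∀ t < aN, B (q t) (q (t + 1)) = B (p t) (p (t + 1)) := by
      intro t ht
      have e1 : q t = p t := by rw [hq]; simp only [if_pos ht]
      have e2 : q (t + 1) = p (t + 1) := by
        by_cases h : t + 1 < aN
        · rw [hq]; simp only [if_pos h]
        · have : t + 1 = aN := by omega
          rw [hq]; simp only [if_neg h, this, haddk, ← hpe, this]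
          simp
      rw [e1, e2]
    have hgf2 : ∀ t, B (q (aN + t)) (q (aN + t + 1)) = B (p (aN + (k + t))) (p (aN + (k + t) + 1)) := by
      intro t
      have e1 : q (aN + t) = p (aN + (k + t)) := by
        rw [hq]; simp only [if_neg (by omega : ¬ aN + t < aN)]
        rw [show aN + t + k = aN + (k + t) by omega]
      have e2 : q (aN + t + 1) = p (aN + (k + t) + 1) := by
        rw [hq]; simp only [if_neg (by omega : ¬ aN + t + 1 < aN)]
        rw [show aN + t + 1 + k = aN + (k + t) + 1 by omega]
      rw [e1, e2]
    have hd1 : wtN B p n = (∏ t ∈ Finset.range aN, B (p t) (p (t + 1))) *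
        ((∏ t ∈ Finset.range k, B (p (aN + t)) (p (aN + t + 1))) *
          (∏ t ∈ Finset.range (n - bN), B (p (aN + (k + t))) (p (aN + (k + t) + 1)))) := by
      rw [wtN]
      rw [show (Finset.range n) = Finset.range (aN + (k + (n - bN))) from by rw [← hsum1]]
      rw [Finset.prod_range_add, Finset.prod_range_add]
    have hd2 : wtN B q (n - k) = (∏ t ∈ Finset.range aN, B (p t) (p (t + 1))) *
        (∏ t ∈ Finset.range (n - bN), B (p (aN + (k + t))) (p (aN + (k + t) + 1))) := by
      rw [wtN]
      rw [show (Finset.range (n - k)) = Finset.range (aN + (n - bN)) from by rw [← hsum2]]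
      rw [Finset.prod_range_add]
      congr 1
      · exact Finset.prod_congr rfl fun t ht => hgf t (Finset.mem_range.mp ht)
      · exact Finset.prod_congr rfl fun t _ => hgf2 t
    have hle : wtN B p n ≤ wtN B q (n - k) := by
      rw [hd1, hd2]
      have h1 : (0 : ℝ) ≤ ∏ t ∈ Finset.range aN, B (p t) (p (t + 1)) :=
        Finset.prod_nonneg fun t _ => hB _ _
      have h2 : (0 : ℝ) ≤ ∏ t ∈ Finset.range (n - bN), B (p (aN + (k + t))) (p (aN + (k + t) + 1)) :=
        Finset.prod_nonneg fun t _ => hB _ _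
      calc (∏ t ∈ Finset.range aN, B (p t) (p (t + 1))) *
          ((∏ t ∈ Finset.range k, B (p (aN + t)) (p (aN + t + 1))) *
            (∏ t ∈ Finset.range (n - bN), B (p (aN + (k + t))) (p (aN + (k + t) + 1))))
          ≤ (∏ t ∈ Finset.range aN, B (p t) (p (t + 1))) *
            (1 * (∏ t ∈ Finset.range (n - bN), B (p (aN + (k + t))) (p (aN + (k + t) + 1)))) := by
            refine mul_le_mul_of_nonneg_left ?_ h1
            exact mul_le_mul_of_nonneg_right hcyc h2
        _ = _ := by rw [one_mul]
    have hwalk : wtN B q (n - k) ≤ mtPow B (n - k) i j := by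
      have := walk_le_pow hB q (n - k)
      rwa [hq0, hqend] at this
    have hstar : mtPow B (n - k) i j ≤ kleeneStar B i j :=
      le_fsup (fun m : Fin n => mtPow B m.1 i j) ⟨n - k, by omega⟩
    calc mtPow B n i j = wtN B p n := hw.symm
      _ ≤ wtN B q (n - k) := hle
      _ ≤ mtPow B (n - k) i j := hwalk
      _ ≤ kleeneStar B i j := hstar

end Surgery

/-! ### Kleene star properties -/

section Star

variable {n : ℕ} [NeZero n] {B : Matrix (Fin n) (Fin n) ℝ}

lemma mtMulVec_pow_zero {x : Fin n → ℝ} (hx : ∀ i, 0 ≤ x i) :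
    mtMulVec (mtPow B 0) x = x := by
  funext i
  show (⨆ j, (if i = j then 1 else 0) * x j) = x i
  refine le_antisymm (fsup_le fun j => ?_) ?_
  · by_cases h : i = j
    · simp [h]
    · simpa [h] using hx i
  · have := le_fsup (fun j => (if i = j then 1 else 0) * x j) i
    simpa using this

lemma mtMulVec_star_eq {x : Fin n → ℝ} (hx : ∀ j, 0 ≤ x j) :
    ∀ i, mtMulVec (kleeneStar B) x i = ⨆ m : Fin n, mtMulVec (mtPow B m.1) x i := by
  intro i
  show (⨆ j, (⨆ m : Fin n, mtPow B m.1 i j) * x j) = _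
  calc (⨆ j, (⨆ m : Fin n, mtPow B m.1 i j) * x j)
      = ⨆ j, ⨆ m : Fin n, mtPow B m.1 i j * x j := by
        exact iSup_congr fun j => fsup_mul (hx j) _
    _ = ⨆ m : Fin n, ⨆ j, mtPow B m.1 i j * x j := by
        exact fsup_comm (fun j m => mtPow B m.1 i j * x j)
    _ = ⨆ m : Fin n, mtMulVec (mtPow B m.1) x i := rfl

lemma star_fix (hB : ∀ i j, 0 ≤ B i j) {x : Fin n → ℝ} (hx : ∀ i, 0 < x i)
    (hd : ∀ i, mtMulVec B x i ≤ x i) : mtMulVec (kleeneStar B) x = x := by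
  have hx0 : ∀ i, 0 ≤ x i := fun i => (hx i).le
  have hpow : ∀ m i, mtMulVec (mtPow B m) x i ≤ x i := by
    intro m
    induction m with
    | zero => intro i; rw [mtMulVec_pow_zero hx0]
    | succ m ih =>
      intro i
      have hassoc : mtMulVec (mtPow B m) (mtMulVec B x) = mtMulVec (mtMulMat (mtPow B m) B) x :=
        mtMulVec_assoc (mtPow_nonneg hB m) hx0
      have : mtMulVec (mtPow B (m + 1)) x i = mtMulVec (mtPow B m) (mtMulVec B x) i := by
        rw [hassoc]; rfl
      rw [this]
      exact le_trans (mtMulVec_mono_vec (mtPow_nonneg hB m) hd i) (ih i)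
  funext i
  rw [mtMulVec_star_eq hx0]
  refine le_antisymm (fsup_le fun m => hpow m.1 i) ?_
  have h0 := le_fsup (fun m : Fin n => mtMulVec (mtPow B m.1) x i)
    ⟨0, Nat.pos_of_ne_zero (NeZero.ne n)⟩
  rwa [mtMulVec_pow_zero hx0] at h0

lemma star_subinv (hB : ∀ i j, 0 ≤ B i j)
    (hc : ∀ (q : ℕ → Fin n) (k : ℕ), 0 < k → k ≤ n → q k = q 0 →
      ∏ t ∈ Finset.range k, B (q t) (q (t + 1)) ≤ 1)
    {u : Fin n → ℝ} (hu : ∀ i, 0 ≤ u i) :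
    ∀ i, mtMulVec B (mtMulVec (kleeneStar B) u) i ≤ mtMulVec (kleeneStar B) u i := by
  have hkmat : ∀ i j, mtMulMat B (kleeneStar B) i j ≤ kleeneStar B i j := by
    intro i j
    have hstep : mtMulMat B (kleeneStar B) i j = ⨆ m : Fin n, mtPow B (m.1 + 1) i j := by
      show (⨆ k, B i k * ⨆ m : Fin n, mtPow B m.1 k j) = _
      calc (⨆ k, B i k * ⨆ m : Fin n, mtPow B m.1 k j)
          = ⨆ k, ⨆ m : Fin n, B i k * mtPow B m.1 k j := by
            exact iSup_congr fun k => mul_fsup (hB i k) _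
        _ = ⨆ m : Fin n, ⨆ k, B i k * mtPow B m.1 k j :=
            fsup_comm (fun k m => B i k * mtPow B m.1 k j)
        _ = ⨆ m : Fin n, mtPow B (m.1 + 1) i j := by
            refine iSup_congr fun m => ?_
            rw [mtPow_succ_left hB m.1]; rfl
    rw [hstep]
    refine fsup_le fun m => ?_
    rcases lt_or_eq_of_le (Nat.succ_le_of_lt m.2) with h | h
    · exact le_fsup (fun m' : Fin n => mtPow B m'.1 i j) ⟨m.1 + 1, h⟩
    · rw [show m.1 + 1 = n from h]; exact pow_le_star hB hc i j
  intro i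
  have hassoc : mtMulVec B (mtMulVec (kleeneStar B) u) =
      mtMulVec (mtMulMat B (kleeneStar B)) u := mtMulVec_assoc hB hu
  rw [hassoc]
  exact mtMulVec_mono_mat hkmat hu i

end Star

/-! ### main theorem -/

theorem stmt7 {n : ℕ} (hn : 0 < n) (A : Matrix (Fin n) (Fin n) ℝ)
    (hA : ∀ i j, 0 ≤ A i j) (hlam : 0 < specRad A) :
    IsLeast {v : ℝ | ∃ x : Fin n → ℝ, (∀ i, 0 < x i) ∧
        v = ⨆ i, ⨆ j, A i j * x j / x i} (specRad A) ∧
      ∀ x : Fin n → ℝ, (∀ i, 0 < x i) →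
        ((⨆ i, ⨆ j, A i j * x j / x i) = specRad A ↔
          ∃ u : Fin n → ℝ, (∀ i, 0 < u i) ∧
            x = mtMulVec (kleeneStar ((specRad A)⁻¹ • A)) u) := by
  haveI : NeZero n := ⟨hn.ne'⟩
  set lam := specRad A with hlamdef
  set B : Matrix (Fin n) (Fin n) ℝ := lam⁻¹ • A with hBdef
  have hBentry : ∀ i j, B i j = lam⁻¹ * A i j := fun i j => rfl
  have hB : ∀ i j, 0 ≤ B i j := fun i j =>
    mul_nonneg (inv_nonneg.mpr hlam.le) (hA i j)
  have hcyc : ∀ (q : ℕ → Fin n) (k : ℕ), 0 < k → k ≤ n → q k = q 0 →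
      ∏ t ∈ Finset.range k, B (q t) (q (t + 1)) ≤ 1 := fun q k hk hkn hcl =>
    Bcycle_le_one hA hlam q k hk hkn hcl
  -- upper bound given subinvariance
  have hup : ∀ x : Fin n → ℝ, (∀ i, 0 < x i) → (∀ i, mtMulVec B x i ≤ x i) →
      (⨆ i, ⨆ j, A i j * x j / x i) ≤ lam := by
    intro x hx hd
    refine fsup_le fun i => fsup_le fun j => ?_
    rw [div_le_iff₀ (hx i)]
    have h1 : B i j * x j ≤ x i :=
      le_trans (le_fsup (fun j' => B i j' * x j') j) (hd i)
    rw [hBentry] at h1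
    have h2 := mul_le_mul_of_nonneg_left h1 hlam.le
    calc A i j * x j = lam * (lam⁻¹ * A i j * x j) := by
          field_simp
      _ ≤ lam * x i := h2
  -- subinvariance given equality/le of sup
  have hdown : ∀ x : Fin n → ℝ, (∀ i, 0 < x i) →
      lam ≤ ⨆ i, ⨆ j, A i j * x j / x i := fun x hx => specRad_le_sup hA hx
  have hsub : ∀ u : Fin n → ℝ, (∀ i, 0 ≤ u i) →
      ∀ i, mtMulVec B (mtMulVec (kleeneStar B) u) i ≤ mtMulVec (kleeneStar B) u i :=
    fun u hu => star_subinv hB hcyc hu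
  have hpos : ∀ u : Fin n → ℝ, (∀ i, 0 < u i) → ∀ i, 0 < mtMulVec (kleeneStar B) u i := by
    intro u hu i
    have hKii : (1 : ℝ) ≤ kleeneStar B i i := by
      have h0 := le_fsup (fun m : Fin n => mtPow B m.1 i i) ⟨0, hn⟩
      simpa [mtPow, kleeneStar] using h0
    have h1 : u i ≤ kleeneStar B i i * u i := le_mul_of_one_le_left (hu i).le hKii
    have h2 : kleeneStar B i i * u i ≤ mtMulVec (kleeneStar B) u i :=
      le_fsup (fun j => kleeneStar B i j * u j) i
    exact lt_of_lt_of_le (hu i) (h1.trans h2)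
  -- the canonical witness
  set xone : Fin n → ℝ := mtMulVec (kleeneStar B) (fun _ => 1) with hxone
  have hxonepos : ∀ i, 0 < xone i := hpos _ (fun _ => one_pos)
  have hxoneval : (⨆ i, ⨆ j, A i j * xone j / xone i) = lam :=
    le_antisymm (hup xone hxonepos (hsub _ (fun _ => one_pos.le))) (hdown xone hxonepos)
  refine ⟨⟨⟨xone, hxonepos, hxoneval.symm⟩, ?_⟩, ?_⟩
  · rintro v ⟨x, hx, rfl⟩
    exact hdown x hx
  · intro x hx
    constructor
    · intro heq
      have hd : ∀ i, mtMulVec B x i ≤ x i := by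
        intro i
        refine fsup_le fun j => ?_
        have h1 : A i j * x j / x i ≤ lam := by
          rw [← heq]
          exact le_trans (le_fsup (fun j' => A i j' * x j' / x i) j)
            (le_fsup (fun i' => ⨆ j', A i' j' * x j' / x i') i)
        rw [div_le_iff₀ (hx i)] at h1
        rw [hBentry]
        calc lam⁻¹ * A i j * x j = lam⁻¹ * (A i j * x j) := by ring
          _ ≤ lam⁻¹ * (lam * x i) := by
              exact mul_le_mul_of_nonneg_left h1 (inv_nonneg.mpr hlam.le)
          _ = x i := by field_simp
      exact ⟨x, hx, (star_fix hB hx hd).symm⟩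
    · rintro ⟨u, hu, rfl⟩
      exact le_antisymm (hup _ (hpos u hu) (hsub u fun i => (hu i).le)) (hdown _ (hpos u hu))
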